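/- Suppose x₁ and x₂ are uniformly random bits and y ∈ {0,1} is any (possibly randomized) function of (x₁,x₂), and suppose z₁, z₂ are (possibly randomized) functions of y. Then min over i ∈ {1,2} and x ∈ {0,1}² of Prob[z_i = x_i | (x₁,x₂) = x] ≤ 1/2. -/
import Mathlib


/-- Probabilistic impossibility of 2-into-1 classical random access codes:
if y ∈ {0,1} is a randomized function of (x₁,x₂) (channel `enc`) and z₁, z₂
are randomized functions of y (channels `dec i`), then some bit of some input
is decoded correctly with probability at most 1/2. -/
theorem two_into_one_decoding_fails
    (enc : Bool × Bool → Bool → ℝ)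
    (dec : Fin 2 → Bool → Bool → ℝ)
    (henc0 : ∀ x y, 0 ≤ enc x y) (henc1 : ∀ x, ∑ y, enc x y = 1)
    (hdec0 : ∀ i y z, 0 ≤ dec i y z) (hdec1 : ∀ i y, ∑ z, dec i y z = 1) :
    ∃ (i : Fin 2) (x : Bool × Bool),
      ∑ y : Bool, enc x y * dec i y (if i = 0 then x.1 else x.2) ≤ 1 / 2 := by
  by_contra hcon
  push_neg at hcon
  have he : ∀ x, enc x false = 1 - enc x true := by
    intro x; have := henc1 x; simp [Fintype.sum_bool] at this; linarith
  have hd : ∀ i y, dec i y false = 1 - dec i y true := by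
    intro i y; have := hdec1 i y; simp [Fintype.sum_bool] at this; linarith
  have hA1 := hcon 0 (false, false)
  have hA2 := hcon 0 (false, true)
  have hA3 := hcon 0 (true, false)
  have hA4 := hcon 0 (true, true)
  have hB1 := hcon 1 (false, false)
  have hB2 := hcon 1 (true, false)
  have hB3 := hcon 1 (false, true)
  have hB4 := hcon 1 (true, true)
  simp only [Fintype.sum_bool, he, hd, if_pos, if_neg, Fin.isValue,
    show ((0:Fin 2) = 0) = True by simp, show ((1:Fin 2) = 0) = False by simp,
    if_true, if_false] at hA1 hA2 hA3 hA4 hB1 hB2 hB3 hB4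
  set p00 := enc (false, false) true
  set p01 := enc (false, true) true
  set p10 := enc (true, false) true
  set p11 := enc (true, true) true
  set a0 := dec 0 false true
  set a1 := dec 0 true true
  set b0 := dec 1 false true
  set b1 := dec 1 true true
  have hbd1 : 0 < (a1 - a0) * (p11 - p00) := by nlinarith [hA1, hA4]
  have hbd2 : 0 < (b1 - b0) * (p11 - p00) := by nlinarith [hB1, hB4]
  have hbd3 : 0 < (a1 - a0) * (p10 - p01) := by nlinarith [hA2, hA3]
  have hbd4 : 0 < (b1 - b0) * (p01 - p10) := by nlinarith [hB2, hB3]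
  nlinarith [mul_pos hbd1 hbd4, mul_pos hbd2 hbd3]
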